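/- For every integer k ≥ 2, every k-uniform hypergraph F, and every ε > 0, there exists n₀ such that for all n ≥ n₀ we have M_F(n) ≤ (π(F) + ε)·C(n,k). -/

import Mathlib

open Finset Set Filter

/-- Adding the `k`-set `e` to the hypergraph with edge set `H` creates a new copy of the
hypergraph with edge set `Fe`, i.e. a copy containing `e` as an edge. -/
def CreatesCopy {ι V : Type*} (Fe : Set (Finset ι)) (H : Set (Finset V)) (e : Finset V) : Prop :=
  ∃ f : ι ↪ V, (∀ s ∈ Fe, s.map f ∈ H ∪ {e}) ∧ ∃ s ∈ Fe, s.map f = e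

/-- One step of the `F`-bootstrap percolation process for `k`-graphs. -/
def bootStep {ι V : Type*} (k : ℕ) (Fe : Set (Finset ι)) (H : Set (Finset V)) :
    Set (Finset V) :=
  H ∪ {e | e.card = k ∧ CreatesCopy Fe H e}

/-- The `F`-bootstrap percolation process starting with `H0`. -/
def procSeq {ι V : Type*} (k : ℕ) (Fe : Set (Finset ι)) (H0 : Set (Finset V)) :
    ℕ → Set (Finset V)
  | 0 => H0
  | i + 1 => bootStep k Fe (procSeq k Fe H0 i)

/-- The running time of the `F`-bootstrap percolation process starting with `H0`. -/
noncomputable def runTime {ι V : Type*} (k : ℕ) (Fe : Set (Finset ι))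
    (H0 : Set (Finset V)) : ℕ :=
  sInf {i | procSeq k Fe H0 i = procSeq k Fe H0 (i + 1)}

/-- The maximum running time over all `k`-uniform starting hypergraphs on `n` vertices. -/
noncomputable def maxRunTime {ι : Type*} (k : ℕ) (Fe : Set (Finset ι)) (n : ℕ) : ℕ :=
  sSup {t | ∃ H0 : Set (Finset (Fin n)), (∀ e ∈ H0, e.card = k) ∧ t = runTime k Fe H0}

/-- `H` contains a copy of the hypergraph with edge set `Fe`. -/
def ContainsCopy {ι V : Type*} (Fe : Set (Finset ι)) (H : Set (Finset V)) : Prop :=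
  ∃ f : ι ↪ V, ∀ s ∈ Fe, s.map f ∈ H

/-- The Turán extremal number `ex(n, F)` for `k`-graphs. -/
noncomputable def exNum {ι : Type*} (k : ℕ) (Fe : Set (Finset ι)) (n : ℕ) : ℕ :=
  sSup {m | ∃ H : Set (Finset (Fin n)),
    (∀ e ∈ H, e.card = k) ∧ ¬ ContainsCopy Fe H ∧ m = H.ncard}

/-- The Turán density `π(F)`. -/
noncomputable def turanDensity {ι : Type*} (k : ℕ) (Fe : Set (Finset ι)) : ℝ :=
  limUnder atTop (fun n : ℕ => (exNum k Fe n : ℝ) / (n.choose k : ℝ))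

/-- The copies of `F` in `H`, as subhypergraphs: pairs of a vertex set and an edge set. -/
def copies {ι V : Type*} [Fintype ι] (Fe : Set (Finset ι)) (H : Set (Finset V)) :
    Set (Finset V × Set (Finset V)) :=
  {p | ∃ f : ι ↪ V, p.1 = Finset.univ.map f ∧ p.2 = (fun s => s.map f) '' Fe ∧
    ∀ s ∈ Fe, s.map f ∈ H}

/-- The step of the process at which the edge `e` is added (`0` if `e ∈ H0`). -/
noncomputable def stepOf {ι V : Type*} (k : ℕ) (Fe : Set (Finset ι)) (H0 : Set (Finset V))
    (e : Finset V) : ℕ :=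
  sInf {s | e ∈ procSeq k Fe H0 s}

/-- `i(D)`: the largest step index whose chosen edge belongs to the edge set `Ed`. -/
noncomputable def idxMax {V : Type*} (e : ℕ → Finset V) (τ : ℕ) (Ed : Set (Finset V)) : ℕ :=
  sSup {i | i ∈ Set.Icc 1 τ ∧ e i ∈ Ed}

/-- `j(D)`: the largest step index whose chosen edge belongs to `Ed` minus `e_{i(D)}`. -/
noncomputable def idxSnd {V : Type*} (e : ℕ → Finset V) (τ : ℕ) (Ed : Set (Finset V)) : ℕ :=
  sSup {j | j ∈ Set.Icc 1 τ ∧ e j ∈ Ed \ {e (idxMax e τ Ed)}}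

/-- The type (1–4) of a copy `D` with completing edge `eD`, as in the paper. -/
def copyType {ι V : Type*} (k : ℕ) (Fe : Set (Finset ι)) (H0 : Set (Finset V))
    (e : ℕ → Finset V) (τ : ℕ) (eD : Finset V) (Ed : Set (Finset V)) (α : ℕ) : Prop :=
  (α = 1 ∧ stepOf k Fe H0 eD ≤ idxSnd e τ Ed) ∨
  (α = 2 ∧ idxSnd e τ Ed < stepOf k Fe H0 eD ∧ stepOf k Fe H0 eD < idxMax e τ Ed) ∨
  (α = 3 ∧ idxMax e τ Ed < stepOf k Fe H0 eD) ∨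
  (α = 4 ∧ stepOf k Fe H0 eD = idxMax e τ Ed)

section Helpers

open Function

/-- Extend an injective-on-`A` map to an embedding. -/
lemma ext_emb {α β : Type*} [Fintype α] [Fintype β] [DecidableEq α] [DecidableEq β]
    (A : Finset α) (φ : α → β) (hinj : Set.InjOn φ A)
    (hcard : Fintype.card α ≤ Fintype.card β) :
    ∃ f : α ↪ β, ∀ x ∈ A, f x = φ x := by
  classical
  set B : Finset β := A.image φ with hB
  have hBcard : B.card = A.card := Finset.card_image_of_injOn hinj
  have hcompl : Fintype.card ↥(Aᶜ : Finset α) ≤ Fintype.card ↥(Bᶜ : Finset β) := by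
    simp only [Fintype.card_coe, Finset.card_compl]
    have h1 : A.card ≤ Fintype.card α := Finset.card_le_univ _
    have h2 : B.card ≤ Fintype.card β := Finset.card_le_univ _
    omega
  obtain ⟨g⟩ := Function.Embedding.nonempty_iff_card_le.2 hcompl
  refine ⟨⟨fun x => if h : x ∈ A then φ x else (g ⟨x, by simp [h]⟩ : ↥(Bᶜ : Finset β)).1, ?_⟩,
    fun x hx => dif_pos hx⟩
  intro x y hxy
  by_cases hx : x ∈ A <;> by_cases hy : y ∈ A <;> simp only [hx, hy, dif_pos, dif_neg,
    not_false_iff] at hxy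
  · exact hinj hx hy hxy
  · exfalso
    have h1 : φ x ∈ B := Finset.mem_image_of_mem φ hx
    have h2 : ((g ⟨y, by simp [hy]⟩ : ↥(Bᶜ : Finset β)) : β) ∈ Bᶜ := Finset.coe_mem _
    rw [hxy] at h1
    rw [Finset.mem_compl] at h2
    exact h2 h1
  · exfalso
    have h1 : φ y ∈ B := Finset.mem_image_of_mem φ hy
    have h2 : ((g ⟨x, by simp [hx]⟩ : ↥(Bᶜ : Finset β)) : β) ∈ Bᶜ := Finset.coe_mem _
    rw [← hxy] at h1
    rw [Finset.mem_compl] at h2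
    exact h2 h1
  · have := g.injective (Subtype.ext hxy)
    simpa using congrArg Subtype.val this

end Helpers

section Proc

variable {ι V : Type*} {k : ℕ} {Fe : Set (Finset ι)} {H0 : Set (Finset V)}

lemma procSeq_succ (i : ℕ) :
    procSeq k Fe H0 (i + 1) = bootStep k Fe (procSeq k Fe H0 i) := rfl

lemma subset_bootStep (H : Set (Finset V)) : H ⊆ bootStep k Fe H :=
  Set.subset_union_left

lemma procSeq_mono : Monotone (procSeq k Fe H0) := by
  apply monotone_nat_of_le_succ
  intro i
  exact subset_bootStep _

lemma procSeq_stab {i : ℕ} (h : procSeq k Fe H0 i = procSeq k Fe H0 (i + 1)) :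
    ∀ j, i ≤ j → procSeq k Fe H0 j = procSeq k Fe H0 i := by
  intro j hj
  induction j with
  | zero =>
    obtain rfl : i = 0 := Nat.le_zero.mp hj
    rfl
  | succ m ih =>
    rcases Nat.lt_or_ge i (m + 1) with hlt | hge
    · have hm : i ≤ m := by omega
      have := ih hm
      rw [procSeq_succ, this, ← procSeq_succ, ← h]
    · have : i = m + 1 := by omega
      rw [this]

lemma stab_exists [Fintype V] [DecidableEq V] :
    ∃ i ≤ Fintype.card (Finset V), procSeq k Fe H0 i = procSeq k Fe H0 (i + 1) := by
  by_contra hcon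
  push_neg at hcon
  have hgrow : ∀ i ≤ Fintype.card (Finset V) + 1, i ≤ (procSeq k Fe H0 i).ncard := by
    intro i hi
    induction i with
    | zero => omega
    | succ m ih =>
      have hm := ih (by omega)
      have hne := hcon m (by omega)
      have hss : procSeq k Fe H0 m ⊂ procSeq k Fe H0 (m + 1) :=
        ssubset_of_subset_of_ne (procSeq_mono (Nat.le_succ m)) hne
      have := Set.ncard_lt_ncard hss (Set.toFinite _)
      omega
  have h1 := hgrow (Fintype.card (Finset V) + 1) le_rfl
  have h2 : (procSeq k Fe H0 (Fintype.card (Finset V) + 1)).ncard ≤ Fintype.card (Finset V) := by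
    have := Set.ncard_le_ncard (Set.subset_univ (procSeq k Fe H0 (Fintype.card (Finset V) + 1)))
      (Set.toFinite _)
    simpa [Set.ncard_univ] using this
  omega

lemma runTime_stab [Fintype V] [DecidableEq V] :
    procSeq k Fe H0 (runTime k Fe H0) = procSeq k Fe H0 (runTime k Fe H0 + 1) := by
  obtain ⟨i, _, hi⟩ := stab_exists (k := k) (Fe := Fe) (H0 := H0)
  exact Nat.sInf_mem (⟨i, hi⟩ : {i | procSeq k Fe H0 i = procSeq k Fe H0 (i + 1)}.Nonempty)

lemma runTime_le [Fintype V] [DecidableEq V] :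
    runTime k Fe H0 ≤ Fintype.card (Finset V) := by
  obtain ⟨i, hle, hi⟩ := stab_exists (k := k) (Fe := Fe) (H0 := H0)
  exact le_trans (Nat.sInf_le hi) hle

lemma ne_of_lt_runTime {i : ℕ} (h : i < runTime k Fe H0) :
    procSeq k Fe H0 i ≠ procSeq k Fe H0 (i + 1) := by
  intro heq
  have h2 := Nat.sInf_le (s := {i | procSeq k Fe H0 i = procSeq k Fe H0 (i + 1)}) heq
  rw [runTime] at h
  omega

/-- Basics of `stepOf`. -/
lemma stepOf_mem {e : Finset V} {j : ℕ} (h : e ∈ procSeq k Fe H0 j) :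
    e ∈ procSeq k Fe H0 (stepOf k Fe H0 e) ∧ stepOf k Fe H0 e ≤ j := by
  constructor
  · exact Nat.sInf_mem (⟨j, h⟩ : {s | e ∈ procSeq k Fe H0 s}.Nonempty)
  · exact Nat.sInf_le (show j ∈ {s | e ∈ procSeq k Fe H0 s} from h)

lemma stepOf_eq {e : Finset V} {i : ℕ} (hi : 1 ≤ i) (h1 : e ∈ procSeq k Fe H0 i)
    (h2 : e ∉ procSeq k Fe H0 (i - 1)) : stepOf k Fe H0 e = i := by
  obtain ⟨hmem, hle⟩ := stepOf_mem h1
  rcases Nat.lt_or_ge (stepOf k Fe H0 e) i with hlt | hge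
  · exact absurd (procSeq_mono (by omega : stepOf k Fe H0 e ≤ i - 1) hmem) h2
  · omega

/-- Key percolation fact: the last edge of a copy whose other edges are all present
at time `j` appears at time at most `j+1`. -/
lemma step_le_of_copy (hFe : ∀ s ∈ Fe, s.card = k) (f : ι ↪ V) {s₀ : Finset ι}
    (hs₀ : s₀ ∈ Fe) (j : ℕ)
    (hothers : ∀ s ∈ Fe, s.map f ≠ s₀.map f → s.map f ∈ procSeq k Fe H0 j) :
    s₀.map f ∈ procSeq k Fe H0 (j + 1) := by
  rw [procSeq_succ]
  right
  refine ⟨by rw [Finset.card_map]; exact hFe s₀ hs₀, f, ?_, s₀, hs₀, rfl⟩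
  intro s hs
  by_cases heq : s.map f = s₀.map f
  · right; simp [heq]
  · left; exact hothers s hs heq

end Proc
section Counting

open Finset

/-- The number of `M`-subsets of `Fin n` containing a fixed `w`-set. -/
lemma card_supersets {n M : ℕ} (W : Finset (Fin n)) (hwM : W.card ≤ M) :
    ((Finset.powersetCard M (Finset.univ : Finset (Fin n))).filter (fun S => W ⊆ S)).card
      = (n - W.card).choose (M - W.card) := by
  classical
  have hc : (Wᶜ : Finset (Fin n)).card = n - W.card := by
    rw [Finset.card_compl]; simp
  rw [← hc, ← Finset.card_powersetCard (M - W.card) Wᶜ]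
  apply Finset.card_bij' (fun S _ => S \ W) (fun T _ => T ∪ W)
  · intro S hS
    rw [Finset.mem_filter, Finset.mem_powersetCard] at hS
    rw [Finset.mem_powersetCard]
    constructor
    · intro a ha
      rw [Finset.mem_sdiff] at ha
      simp [Finset.mem_compl, ha.2]
    · rw [Finset.card_sdiff_of_subset hS.2, hS.1.2]
  · intro T hT
    rw [Finset.mem_powersetCard] at hT
    rw [Finset.mem_filter, Finset.mem_powersetCard]
    have hdisj : Disjoint T W := by
      rw [Finset.disjoint_right]
      intro a haW haT
      have := hT.1 haT
      simp [Finset.mem_compl] at this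
      exact this haW
    refine ⟨⟨Finset.subset_univ _, ?_⟩, Finset.subset_union_right⟩
    rw [Finset.card_union_of_disjoint hdisj, hT.2]
    have hWn : W.card ≤ n := by
      simpa using Finset.card_le_univ W
    omega
  · intro S hS
    rw [Finset.mem_filter] at hS
    exact Finset.sdiff_union_of_subset hS.2
  · intro T hT
    rw [Finset.mem_powersetCard] at hT
    have hdisj : Disjoint T W := by
      rw [Finset.disjoint_right]
      intro a haW haT
      have := hT.1 haT
      simp [Finset.mem_compl] at this
      exact this haW
    rw [Finset.union_sdiff_cancel_right hdisj]

/-- The binomial identity `C(n,b)·C(b,a) = C(n,a)·C(n-a,b-a)`. -/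
lemma choose_identity {n a b : ℕ} (hab : a ≤ b) (hbn : b ≤ n) :
    n.choose b * b.choose a = n.choose a * (n - a).choose (b - a) := by
  have hpos : 0 < a.factorial * (b - a).factorial * (n - b).factorial :=
    Nat.mul_pos (Nat.mul_pos a.factorial_pos (b - a).factorial_pos) (n - b).factorial_pos
  apply Nat.eq_of_mul_eq_mul_right hpos
  have h1 : n.choose b * b.choose a * (a.factorial * (b - a).factorial * (n - b).factorial)
      = (b.choose a * a.factorial * (b - a).factorial) * (n.choose b * (n - b).factorial) := by
    ring
  have h2 : n.choose a * (n - a).choose (b - a)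
        * (a.factorial * (b - a).factorial * (n - b).factorial)
      = ((n - a).choose (b - a) * (b - a).factorial * ((n - a) - (b - a)).factorial)
        * (n.choose a * a.factorial) := by
    have : n - b = (n - a) - (b - a) := by omega
    rw [this]; ring
  rw [h1, h2, Nat.choose_mul_factorial_mul_factorial hab,
    Nat.choose_mul_factorial_mul_factorial (by omega : b - a ≤ n - a)]
  have h3 : b.factorial * (n.choose b * (n - b).factorial)
      = n.choose b * b.factorial * (n - b).factorial := by ring
  have h4 : (n - a).factorial * (n.choose a * a.factorial)
      = n.choose a * a.factorial * (n - a).factorial := by ring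
  rw [h3, h4, Nat.choose_mul_factorial_mul_factorial hbn,
    Nat.choose_mul_factorial_mul_factorial (by omega : a ≤ n)]

/-- Lower bound for binomial coefficients. -/
lemma pow_le_factorial_mul_choose (n v : ℕ) :
    (n + 1 - v) ^ v ≤ v.factorial * n.choose v := by
  rw [← Nat.descFactorial_eq_factorial_mul_choose]
  exact Nat.pow_sub_le_descFactorial n v

end Counting
section ExNum

open Finset

set_option linter.unusedSectionVars false

variable {ι : Type*} [Fintype ι] {k : ℕ} {Fe : Set (Finset ι)}

lemma containsCopy_mono {V : Type*} {A B : Set (Finset V)} (h : ContainsCopy Fe A)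
    (hAB : A ⊆ B) : ContainsCopy Fe B := by
  obtain ⟨f, hf⟩ := h
  exact ⟨f, fun s hs => hAB (hf s hs)⟩

lemma containsCopy_map {W U : Type*} (g : W ↪ U) {G : Set (Finset W)}
    (h : ContainsCopy Fe G) : ContainsCopy Fe ((fun e => e.map g) '' G) := by
  obtain ⟨f, hf⟩ := h
  refine ⟨f.trans g, fun s hs => ⟨s.map f, hf s hs, ?_⟩⟩
  simp [Finset.map_map]

lemma exSet_bddAbove (n : ℕ) :
    BddAbove {m | ∃ H : Set (Finset (Fin n)),
      (∀ e ∈ H, e.card = k) ∧ ¬ ContainsCopy Fe H ∧ m = H.ncard} := by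
  refine ⟨Fintype.card (Finset (Fin n)), ?_⟩
  rintro m ⟨H, -, -, rfl⟩
  have := Set.ncard_le_ncard (Set.subset_univ H) (Set.toFinite _)
  simpa [Set.ncard_univ] using this

lemma zero_mem_exSet (hne : Fe.Nonempty) (n : ℕ) :
    0 ∈ {m | ∃ H : Set (Finset (Fin n)),
      (∀ e ∈ H, e.card = k) ∧ ¬ ContainsCopy Fe H ∧ m = H.ncard} := by
  refine ⟨∅, by simp, ?_, by simp⟩
  rintro ⟨f, hf⟩
  obtain ⟨s, hs⟩ := hne
  exact hf s hs

lemma exNum_le_choose (hne : Fe.Nonempty) (hFe : ∀ s ∈ Fe, s.card = k) (n : ℕ) :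
    exNum k Fe n ≤ n.choose k := by
  apply csSup_le ⟨0, zero_mem_exSet hne n⟩
  rintro m ⟨H, hU, -, rfl⟩
  have hsub : H ⊆ ↑(Finset.powersetCard k (Finset.univ : Finset (Fin n))) := by
    intro e he
    rw [Finset.mem_coe, Finset.mem_powersetCard]
    exact ⟨Finset.subset_univ e, hU e he⟩
  calc H.ncard ≤ _ := Set.ncard_le_ncard hsub (Set.toFinite _)
    _ = n.choose k := by
        rw [Set.ncard_coe_finset, Finset.card_powersetCard, Finset.card_univ, Fintype.card_fin]

/-- A graph on `U` supported inside the range of `g : Fin m ↪ U` with no copy of `F`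
has at most `exNum k Fe m` edges. -/
lemma ncard_le_exNum {U : Type*} [Fintype U] [DecidableEq U] {m : ℕ} (g : Fin m ↪ U)
    (A : Set (Finset U)) (hA : ∀ e ∈ A, ↑e ⊆ Set.range g)
    (hU : ∀ e ∈ A, e.card = k) (hno : ¬ ContainsCopy Fe A) : A.ncard ≤ exNum k Fe m := by
  classical
  set G' : Set (Finset (Fin m)) := (fun e' : Finset (Fin m) => e'.map g) ⁻¹' A with hG'
  have himg : (fun e' : Finset (Fin m) => e'.map g) '' G' = A := by
    apply Set.Subset.antisymm (Set.image_preimage_subset _ _)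
    intro e he
    have hrange : ↑e ⊆ Set.range g := hA e he
    have hp := Function.Injective.injOn g.injective (s := g ⁻¹' ↑e)
    have hmapeq : (e.preimage g hp).map g = e := by
      rw [Finset.map_eq_image, Finset.image_preimage]
      exact Finset.filter_true_of_mem (fun x hx => hrange hx)
    refine ⟨e.preimage g hp, ?_, ?_⟩
    · show (e.preimage g hp).map g ∈ A
      rwa [hmapeq]
    · show (e.preimage g hp).map g = e
      exact hmapeq
  have hcard : G'.ncard = A.ncard := by
    rw [← himg, Set.ncard_image_of_injective G' (Finset.map_injective g)]
  have hmem : A.ncard ∈ {m' | ∃ H : Set (Finset (Fin m)),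
      (∀ e ∈ H, e.card = k) ∧ ¬ ContainsCopy Fe H ∧ m' = H.ncard} := by
    refine ⟨G', ?_, ?_, hcard.symm⟩
    · intro e' he'
      have : (e'.map g).card = k := hU _ he'
      rwa [Finset.card_map] at this
    · intro hcopy
      have := containsCopy_map g hcopy
      rw [himg] at this
      exact hno this
  exact le_csSup (exSet_bddAbove m) hmem

lemma exNum_antitone_nat (hne : Fe.Nonempty) (n : ℕ) :
    exNum k Fe (n + 1) * (n + 1 - k) ≤ (n + 1) * exNum k Fe n := by
  classical
  have hmem : exNum k Fe (n+1) ∈ {m | ∃ H : Set (Finset (Fin (n+1))),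
      (∀ e ∈ H, e.card = k) ∧ ¬ ContainsCopy Fe H ∧ m = H.ncard} :=
    Nat.sSup_mem ⟨0, zero_mem_exSet hne (n+1)⟩ (exSet_bddAbove (n+1))
  obtain ⟨H, hU, hNC, hcard⟩ := hmem
  have hHfin : H.Finite := Set.toFinite H
  set Hf : Finset (Finset (Fin (n+1))) := hHfin.toFinset with hHf
  have hHfcard : Hf.card = H.ncard := by
    rw [Set.ncard_eq_toFinset_card H hHfin]
  have hsum : ∑ x : Fin (n+1), (Hf.filter (fun e => x ∉ e)).card = Hf.card * (n + 1 - k) := by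
    have h1 : ∀ x : Fin (n+1), (Hf.filter (fun e => x ∉ e)).card
        = ∑ e ∈ Hf, if x ∉ e then 1 else 0 := fun x => Finset.card_filter _ _
    simp only [h1]
    rw [Finset.sum_comm]
    have h2 : ∀ e ∈ Hf, (∑ x : Fin (n+1), if x ∉ e then 1 else 0) = n + 1 - k := by
      intro e he
      have h3 : (∑ x : Fin (n+1), if x ∉ e then 1 else 0)
          = (Finset.univ.filter (fun x => x ∉ e)).card := (Finset.card_filter _ _).symm
      have h4 : Finset.univ.filter (fun x : Fin (n+1) => x ∉ e) = eᶜ := by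
        ext y; simp [Finset.mem_compl]
      rw [h3, h4, Finset.card_compl, hU e (hHfin.mem_toFinset.mp he)]
      simp
    rw [Finset.sum_congr rfl h2, Finset.sum_const, smul_eq_mul]
  have hbound : ∀ x : Fin (n+1), (Hf.filter (fun e => x ∉ e)).card ≤ exNum k Fe n := by
    intro x
    set A : Set (Finset (Fin (n+1))) := ↑(Hf.filter (fun e => x ∉ e)) with hA
    have hmemA : ∀ e, e ∈ A ↔ e ∈ H ∧ x ∉ e := by
      intro e
      simp [hA, hHf, Finset.mem_filter, hHfin.mem_toFinset]
    have := ncard_le_exNum (Fe := Fe) (k := k)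
      (⟨x.succAbove, Fin.succAbove_right_injective⟩ : Fin n ↪ Fin (n+1)) A
      (fun e he y hy => by
        show y ∈ Set.range x.succAbove
        rw [Fin.range_succAbove]
        have hex := (hmemA e).mp he
        intro hyx
        rw [Set.mem_singleton_iff] at hyx
        subst hyx
        exact hex.2 hy)
      (fun e he => hU e ((hmemA e).mp he).1)
      (fun hcopy => hNC (containsCopy_mono hcopy (fun e he => ((hmemA e).mp he).1)))
    rwa [hA, Set.ncard_coe_finset] at this
  calc exNum k Fe (n+1) * (n + 1 - k) = Hf.card * (n + 1 - k) := by rw [hHfcard, ← hcard]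
    _ = ∑ x : Fin (n+1), (Hf.filter (fun e => x ∉ e)).card := hsum.symm
    _ ≤ ∑ _x : Fin (n+1), exNum k Fe n := Finset.sum_le_sum (fun x _ => hbound x)
    _ = (n + 1) * exNum k Fe n := by rw [Finset.sum_const, smul_eq_mul]; simp

end ExNum
section Turan

set_option linter.unusedSectionVars false

open Filter Topology

variable {ι : Type*} [Fintype ι] {k : ℕ} {Fe : Set (Finset ι)}

lemma turan_facts (hk1 : 1 ≤ k) (hne : Fe.Nonempty) :
    Tendsto (fun n : ℕ => (exNum k Fe n : ℝ) / (n.choose k : ℝ)) atTop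
      (𝓝 (turanDensity k Fe)) ∧ 0 ≤ turanDensity k Fe := by
  set a : ℕ → ℝ := fun n => (exNum k Fe n : ℝ) / (n.choose k : ℝ) with ha
  have hstep : ∀ n : ℕ, k ≤ n → a (n + 1) ≤ a n := by
    intro n hkn
    have hnat := exNum_antitone_nat (k := k) hne n
    have hid : (n + 1 - k) * (n+1).choose k = (n+1) * n.choose k := by
      calc (n + 1 - k) * (n+1).choose k = (n+1).choose (k+1) * (k+1) := by
            rw [Nat.choose_succ_right_eq (n+1) k]; ring
        _ = (n+1) * n.choose k := by rw [← Nat.add_one_mul_choose_eq]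
    have key2 : (exNum k Fe (n+1) * n.choose k) * (n+1)
        ≤ (exNum k Fe n * (n+1).choose k) * (n+1) := by
      have l1 : (exNum k Fe (n+1) * n.choose k) * (n+1)
          = exNum k Fe (n+1) * ((n+1) * n.choose k) := by ring
      have l2 : (exNum k Fe n * (n+1).choose k) * (n+1)
          = ((n+1) * exNum k Fe n) * (n+1).choose k := by ring
      rw [l1, l2, ← hid]
      calc exNum k Fe (n+1) * ((n + 1 - k) * (n+1).choose k)
          = (exNum k Fe (n+1) * (n + 1 - k)) * (n+1).choose k := by ring
        _ ≤ ((n+1) * exNum k Fe n) * (n+1).choose k := Nat.mul_le_mul_right _ hnat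
    have key := Nat.le_of_mul_le_mul_right key2 (by omega)
    have hc0 : (0:ℝ) < (n.choose k : ℝ) := by
      exact_mod_cast Nat.choose_pos hkn
    have hc1 : (0:ℝ) < ((n+1).choose k : ℝ) := by
      exact_mod_cast Nat.choose_pos (by omega : k ≤ n + 1)
    rw [ha]
    simp only []
    rw [div_le_div_iff₀ hc1 hc0]
    exact_mod_cast key
  set b : ℕ → ℝ := fun j => a (j + k) with hb
  have hbant : Antitone b := by
    apply antitone_nat_of_succ_le
    intro j
    have : j + 1 + k = (j + k) + 1 := by omega
    rw [hb]
    simp only []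
    rw [this]
    exact hstep (j + k) (by omega)
  have hbdd : BddBelow (Set.range b) := by
    refine ⟨0, ?_⟩
    rintro y ⟨j, rfl⟩
    positivity
  have htb := tendsto_atTop_ciInf hbant hbdd
  have hta : Tendsto a atTop (𝓝 (⨅ j, b j)) := (tendsto_add_atTop_iff_nat k).1 htb
  have hlim : turanDensity k Fe = ⨅ j, b j := hta.limUnder_eq
  constructor
  · rw [hlim]; exact hta
  · rw [hlim]
    exact ge_of_tendsto' hta (fun n => by positivity)

end Turan
section MainHelpers

set_option linter.unusedSectionVars false

open Finset

/-- Counting embeddings that send two fixed edges of `F` onto two fixed `k`-sets. -/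
lemma Q_bound {ι V : Type*} [Fintype ι] [Fintype V] [DecidableEq ι] [DecidableEq V]
    {k : ℕ} (hk : 2 ≤ k) (hn : 1 ≤ Fintype.card V)
    {s₁ s₂ : Finset ι} (hs1 : s₁.card = k) (hs2 : s₂.card = k) (hs12 : s₁ ≠ s₂)
    (a b : Finset V) (ha : a.card = k) (hb : b.card = k) :
    ((Finset.univ : Finset (ι ↪ V)).filter
        (fun f => s₁.map f = a ∧ s₂.map f = b)).card
      ≤ (2*k)^(2*k) * (Fintype.card V)^(Fintype.card ι - (k+1)) := by
  classical
  set U : Finset ι := s₁ ∪ s₂ with hU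
  set ab : Finset V := a ∪ b with hab
  have habne : ab.Nonempty := by
    have : a.Nonempty := Finset.card_pos.mp (by omega)
    exact this.mono Finset.subset_union_left
  set d : ↥ab := ⟨habne.choose, habne.choose_spec⟩ with hd
  set φ : (ι ↪ V) → ((↥U → ↥ab) × (↥(Uᶜ : Finset ι) → V)) :=
    fun g => (fun x => if h : g x.1 ∈ ab then ⟨g x.1, h⟩ else d, fun x => g x.1) with hφ
  have hinj : Set.InjOn φ ↑((Finset.univ : Finset (ι ↪ V)).filter
      (fun f => s₁.map f = a ∧ s₂.map f = b)) := by
    intro f₁ hf₁ f₂ hf₂ heq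
    simp only [Finset.coe_filter, Set.mem_setOf_eq] at hf₁ hf₂
    have hval : ∀ g : ι ↪ V, s₁.map g = a ∧ s₂.map g = b → ∀ x ∈ U, g x ∈ ab := by
      rintro g ⟨h1, h2⟩ x hx
      rcases Finset.mem_union.mp hx with hx1 | hx2
      · exact Finset.mem_union_left _ (h1 ▸ Finset.mem_map_of_mem g hx1)
      · exact Finset.mem_union_right _ (h2 ▸ Finset.mem_map_of_mem g hx2)
    apply Function.Embedding.ext
    intro x
    by_cases hx : x ∈ U
    · have e1 := congrFun (congrArg Prod.fst heq) ⟨x, hx⟩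
      simp only [hφ] at e1
      have m1 := hval f₁ hf₁.2 x hx
      have m2 := hval f₂ hf₂.2 x hx
      split_ifs at e1
      all_goals first
        | exact congrArg Subtype.val e1
        | exact absurd m1 (by assumption)
        | exact absurd m2 (by assumption)
    · have e2 := congrFun (congrArg Prod.snd heq) ⟨x, Finset.mem_compl.mpr hx⟩
      simp only [hφ] at e2
      exact e2
  have hcards := Finset.card_le_card_of_injOn φ (fun f _ => Finset.mem_univ (φ f)) hinj
  rw [Finset.card_univ, Fintype.card_prod, Fintype.card_fun, Fintype.card_fun,
    Fintype.card_coe, Fintype.card_coe, Fintype.card_coe] at hcards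
  have hUk : k + 1 ≤ U.card := by
    by_contra hcon
    push_neg at hcon
    have h1 : s₁ = U := Finset.eq_of_subset_of_card_le Finset.subset_union_left
      (by rw [hs1]; omega)
    have h2 : s₂ = U := Finset.eq_of_subset_of_card_le Finset.subset_union_right
      (by rw [hs2]; omega)
    exact hs12 (h1.trans h2.symm)
  have hU2k : U.card ≤ 2 * k := by
    have h := Finset.card_union_le s₁ s₂
    rw [← hU] at h
    omega
  have hUv : U.card ≤ Fintype.card ι := Finset.card_le_univ U
  have hab2k : ab.card ≤ 2 * k := by
    have h1 := Finset.card_union_le a b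
    rw [← hab] at h1
    omega
  have hcompl : (Uᶜ : Finset ι).card = Fintype.card ι - U.card := by
    rw [Finset.card_compl]
  calc ((Finset.univ : Finset (ι ↪ V)).filter
        (fun f => s₁.map f = a ∧ s₂.map f = b)).card
      ≤ ab.card ^ U.card * Fintype.card V ^ (Uᶜ : Finset ι).card := hcards
    _ ≤ (2*k)^(2*k) * (Fintype.card V)^(Fintype.card ι - (k+1)) := by
        apply Nat.mul_le_mul
        · exact le_trans (Nat.pow_le_pow_left hab2k _)
            (Nat.pow_le_pow_right (by omega) hU2k)
        · rw [hcompl]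
          exact Nat.pow_le_pow_right hn (by omega)

/-- Every copy of `F` whose edges are among the chosen edges of the process contains a
pair of edges added at consecutive steps. -/
lemma exists_consecutive {ι V : Type*} {k τ : ℕ} {Fe : Set (Finset ι)}
    {H0 : Set (Finset V)} (hFe : ∀ s ∈ Fe, s.card = k)
    (htwo : ∃ s₁ ∈ Fe, ∃ s₂ ∈ Fe, s₁ ≠ s₂) (efun : ℕ → Finset V)
    (hstep : ∀ i, 1 ≤ i → i ≤ τ → stepOf k Fe H0 (efun i) = i)
    (hproc : ∀ i, 1 ≤ i → i ≤ τ → efun i ∈ procSeq k Fe H0 i)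
    (f : ι ↪ V) (hf : ∀ s ∈ Fe, ∃ i, 1 ≤ i ∧ i ≤ τ ∧ s.map f = efun i) :
    ∃ m, 2 ≤ m ∧ m ≤ τ ∧ (∃ s ∈ Fe, s.map f = efun (m-1)) ∧
      (∃ s ∈ Fe, s.map f = efun m) := by
  classical
  set I : Finset ℕ := (Finset.Icc 1 τ).filter (fun i => ∃ s ∈ Fe, s.map f = efun i) with hI
  have hImem : ∀ i, i ∈ I ↔ (1 ≤ i ∧ i ≤ τ) ∧ ∃ s ∈ Fe, s.map f = efun i := by
    intro i
    rw [hI, Finset.mem_filter, Finset.mem_Icc]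
  obtain ⟨s₁, hs₁, s₂, hs₂, hs12⟩ := htwo
  obtain ⟨i₁, hi₁1, hi₁τ, hi₁e⟩ := hf s₁ hs₁
  obtain ⟨i₂, hi₂1, hi₂τ, hi₂e⟩ := hf s₂ hs₂
  have hi₁I : i₁ ∈ I := (hImem i₁).mpr ⟨⟨hi₁1, hi₁τ⟩, s₁, hs₁, hi₁e⟩
  have hi₂I : i₂ ∈ I := (hImem i₂).mpr ⟨⟨hi₂1, hi₂τ⟩, s₂, hs₂, hi₂e⟩
  have hi12 : i₁ ≠ i₂ := by
    intro hcon
    apply hs12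
    apply Finset.map_injective f
    rw [hi₁e, hi₂e, hcon]
  have hIne : I.Nonempty := ⟨i₁, hi₁I⟩
  set m : ℕ := I.max' hIne with hm
  have hmI : m ∈ I := I.max'_mem hIne
  obtain ⟨⟨hm1, hmτ⟩, s₀, hs₀, hs₀m⟩ := (hImem m).mp hmI
  have hI'ne : (I.erase m).Nonempty := by
    rcases eq_or_ne i₁ m with rfl | h
    · exact ⟨i₂, Finset.mem_erase.mpr ⟨fun hc => hi12 hc.symm, hi₂I⟩⟩
    · exact ⟨i₁, Finset.mem_erase.mpr ⟨h, hi₁I⟩⟩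
  set m' : ℕ := (I.erase m).max' hI'ne with hm'
  have hm'mem : m' ∈ I.erase m := (I.erase m).max'_mem hI'ne
  have hm'I : m' ∈ I := Finset.mem_of_mem_erase hm'mem
  have hm'ne : m' ≠ m := Finset.ne_of_mem_erase hm'mem
  have hm'lt : m' < m := lt_of_le_of_ne (I.le_max' m' hm'I) hm'ne
  obtain ⟨⟨hm'1, hm'τ⟩, s', hs', hs'm⟩ := (hImem m').mp hm'I
  have hothers : ∀ s ∈ Fe, s.map f ≠ s₀.map f → s.map f ∈ procSeq k Fe H0 m' := by
    intro s hs hneq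
    obtain ⟨i, hi1, hiτ, hie⟩ := hf s hs
    have hiI : i ∈ I := (hImem i).mpr ⟨⟨hi1, hiτ⟩, s, hs, hie⟩
    have hineqm : i ≠ m := by
      intro hc
      apply hneq
      rw [hie, hs₀m, hc]
    have : i ≤ m' := (I.erase m).le_max' i (Finset.mem_erase.mpr ⟨hineqm, hiI⟩)
    rw [hie]
    exact procSeq_mono this (hproc i hi1 hiτ)
  have hkey := step_le_of_copy (H0 := H0) hFe f hs₀ m' hothers
  rw [hs₀m] at hkey
  have hle := (stepOf_mem hkey).2
  rw [hstep m hm1 hmτ] at hle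
  have hm'eq : m' = m - 1 := by omega
  refine ⟨m, by omega, hmτ, ⟨s', hs', ?_⟩, ⟨s₀, hs₀, hs₀m⟩⟩
  rw [hs'm, hm'eq]

end MainHelpers
section Core

set_option linter.unusedSectionVars false
set_option maxHeartbeats 1000000

open Finset Filter Topology

lemma core_bound {ι : Type*} [Fintype ι] {k : ℕ} (hk : 2 ≤ k) (Fe : Set (Finset ι))
    (hFe : ∀ s ∈ Fe, s.card = k) (hcov : ∀ x : ι, ∃ s ∈ Fe, x ∈ s)
    (htwo : ∃ s₁ ∈ Fe, ∃ s₂ ∈ Fe, s₁ ≠ s₂) {ε : ℝ} (hε : 0 < ε) :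
    ∃ n₀ : ℕ, ∀ n : ℕ, n₀ ≤ n → ∀ H0 : Set (Finset (Fin n)),
      (runTime k Fe H0 : ℝ) ≤ (turanDensity k Fe + ε) * (n.choose k : ℝ) := by
  classical
  have hFene : Fe.Nonempty := by
    obtain ⟨s₁, hs₁, -⟩ := htwo
    exact ⟨s₁, hs₁⟩
  obtain ⟨htd, hπ0⟩ := turan_facts (k := k) (by omega) hFene
  set π : ℝ := turanDensity k Fe with hπ
  set v : ℕ := Fintype.card ι with hv
  have hkv : k + 1 ≤ v := by
    obtain ⟨s₁, hs₁, s₂, hs₂, hs12⟩ := htwo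
    have hUk : k + 1 ≤ (s₁ ∪ s₂).card := by
      by_contra hcon
      push_neg at hcon
      have h1 : s₁ = s₁ ∪ s₂ := Finset.eq_of_subset_of_card_le Finset.subset_union_left
        (by rw [hFe s₁ hs₁]; omega)
      have h2 : s₂ = s₁ ∪ s₂ := Finset.eq_of_subset_of_card_le Finset.subset_union_right
        (by rw [hFe s₂ hs₂]; omega)
      exact hs12 (h1.trans h2.symm)
    exact le_trans hUk (Finset.card_le_univ _)
  -- choose M
  have hev : ∀ᶠ M in atTop, (exNum k Fe M : ℝ) / (M.choose k : ℝ) < π + ε/2 :=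
    htd.eventually (gt_mem_nhds (by linarith))
  obtain ⟨M, hMa, hMv⟩ := (hev.and (eventually_ge_atTop (max v (k+1)))).exists
  have hvM : v ≤ M := le_trans (le_max_left _ _) hMv
  have hk1M : k + 1 ≤ M := le_trans (le_max_right _ _) hMv
  have hkM : k ≤ M := by omega
  have hMk0 : (0:ℝ) < (M.choose k : ℝ) := by exact_mod_cast Nat.choose_pos hkM
  have hexM : (exNum k Fe M : ℝ) ≤ (π + ε/2) * (M.choose k : ℝ) := by
    have := mul_le_mul_of_nonneg_right (le_of_lt hMa) (le_of_lt hMk0)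
    rwa [div_mul_cancel₀ _ (ne_of_gt hMk0)] at this
  -- constants
  set FeF : Finset (Finset ι) := (Set.toFinite Fe).toFinset with hFeF
  set C₁ : ℕ := FeF.card^2 * (2*k)^(2*k) with hC₁
  set D : ℝ := (C₁ : ℝ) * 2^(v+1) * (v.factorial : ℝ) * (M.choose v : ℝ) with hD
  obtain ⟨n₁, hn₁⟩ := exists_nat_gt (D / ε)
  refine ⟨max n₁ (max M (2*v + 2*k + 2)), ?_⟩
  intro n hn H0
  by_contra hcon
  push_neg at hcon
  set τ : ℕ := runTime k Fe H0 with hτ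
  have hn₁n : n₁ ≤ n := le_trans (le_max_left _ _) hn
  have hnM : M ≤ n := le_trans (le_trans (le_max_left _ _) (le_max_right _ _)) hn
  have hnv2 : 2*v + 2*k + 2 ≤ n := le_trans (le_trans (le_max_right _ _) (le_max_right _ _)) hn
  have hn1 : 1 ≤ n := by omega
  have hvn : v ≤ n := by omega
  have hkn : k ≤ n := by omega
  have hCnk_pos : (0:ℝ) < (n.choose k : ℝ) := by exact_mod_cast Nat.choose_pos hkn
  have hτ1 : 1 ≤ τ := by
    by_contra hτ0
    push_neg at hτ0
    have : τ = 0 := by omega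
    rw [this] at hcon
    have : (0:ℝ) < (π + ε) * (n.choose k : ℝ) := by
      apply mul_pos (by linarith) hCnk_pos
    simp at hcon
    linarith
  -- the chosen edges
  set efun : ℕ → Finset (Fin n) := fun i =>
    if h : (procSeq k Fe H0 i \ procSeq k Fe H0 (i-1)).Nonempty then h.some else ∅ with hefun
  have hediff : ∀ i, 1 ≤ i → i ≤ τ →
      efun i ∈ procSeq k Fe H0 i \ procSeq k Fe H0 (i-1) := by
    intro i h1 hiτ
    have hlt : i - 1 < τ := by omega
    have hne2 := ne_of_lt_runTime (k := k) (Fe := Fe) (H0 := H0) hlt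
    have heq : i - 1 + 1 = i := by omega
    rw [heq] at hne2
    have hsub : procSeq k Fe H0 (i-1) ⊆ procSeq k Fe H0 i := procSeq_mono (by omega)
    have hss : procSeq k Fe H0 (i-1) ⊂ procSeq k Fe H0 i := hsub.ssubset_of_ne hne2
    obtain ⟨x, hx1, hx2⟩ := Set.exists_of_ssubset hss
    have hnee : (procSeq k Fe H0 i \ procSeq k Fe H0 (i-1)).Nonempty := ⟨x, hx1, hx2⟩
    simp only [hefun, dif_pos hnee]
    exact hnee.some_mem
  have hproci : ∀ i, 1 ≤ i → i ≤ τ → efun i ∈ procSeq k Fe H0 i :=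
    fun i h1 h2 => (hediff i h1 h2).1
  have hstepi : ∀ i, 1 ≤ i → i ≤ τ → stepOf k Fe H0 (efun i) = i := by
    intro i h1 h2
    exact stepOf_eq h1 (hediff i h1 h2).1 (hediff i h1 h2).2
  have hcardi : ∀ i, 1 ≤ i → i ≤ τ → (efun i).card = k := by
    intro i h1 h2
    have h := hediff i h1 h2
    have heq : i = (i - 1) + 1 := by omega
    have h1' := h.1
    rw [heq, procSeq_succ] at h1'
    rcases h1' with hin | hnew
    · rw [← heq] at hin
      exact absurd hin h.2
    · have hcc := hnew.1
      rw [← heq] at hcc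
      exact hcc
  -- the graph of chosen edges
  set Gf : Finset (Finset (Fin n)) := (Finset.Icc 1 τ).image efun with hGf
  have hGfmem : ∀ e, e ∈ Gf ↔ ∃ i, 1 ≤ i ∧ i ≤ τ ∧ efun i = e := by
    intro e
    simp only [hGf, Finset.mem_image, Finset.mem_Icc]
    constructor
    · rintro ⟨i, ⟨hi1, hi2⟩, hie⟩; exact ⟨i, hi1, hi2, hie⟩
    · rintro ⟨i, hi1, hi2, hie⟩; exact ⟨i, ⟨hi1, hi2⟩, hie⟩
  have hinjOn : Set.InjOn efun ↑(Finset.Icc 1 τ) := by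
    intro i hi j hj hij
    rw [Finset.coe_Icc, Set.mem_Icc] at hi hj
    have h1 := hstepi i hi.1 hi.2
    have h2 := hstepi j hj.1 hj.2
    rw [← h1, ← h2, hij]
  have hGfcard : Gf.card = τ := by
    rw [hGf, Finset.card_image_of_injOn hinjOn, Nat.card_Icc]
    omega
  have hGfunif : ∀ e ∈ Gf, e.card = k := by
    intro e he
    obtain ⟨i, h1, h2, rfl⟩ := (hGfmem e).mp he
    exact hcardi i h1 h2
  have hτCnk : τ ≤ n.choose k := by
    rw [← hGfcard]
    have hsub : Gf ⊆ Finset.powersetCard k (Finset.univ : Finset (Fin n)) := by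
      intro e he
      rw [Finset.mem_powersetCard]
      exact ⟨Finset.subset_univ _, hGfunif e he⟩
    calc Gf.card ≤ _ := Finset.card_le_card hsub
      _ = n.choose k := by rw [Finset.card_powersetCard, Finset.card_univ, Fintype.card_fin]
  -- supersaturation
  set PM : Finset (Finset (Fin n)) := Finset.powersetCard M (Finset.univ : Finset (Fin n))
    with hPM
  have hPMcard : PM.card = n.choose M := by
    rw [hPM, Finset.card_powersetCard, Finset.card_univ, Fintype.card_fin]
  set X : Finset (Finset (Fin n)) :=
    PM.filter (fun S => ContainsCopy Fe {e : Finset (Fin n) | e ∈ Gf ∧ e ⊆ S}) with hX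
  have hsum : ∑ S ∈ PM, (Gf.filter (fun e => e ⊆ S)).card = τ * ((n-k).choose (M-k)) := by
    have h1 : ∀ S, (Gf.filter (fun e => e ⊆ S)).card
        = ∑ e ∈ Gf, if e ⊆ S then 1 else 0 := fun S => Finset.card_filter _ _
    calc ∑ S ∈ PM, (Gf.filter (fun e => e ⊆ S)).card
        = ∑ S ∈ PM, ∑ e ∈ Gf, if e ⊆ S then 1 else 0 :=
          Finset.sum_congr rfl (fun S _ => h1 S)
      _ = ∑ e ∈ Gf, ∑ S ∈ PM, if e ⊆ S then 1 else 0 := Finset.sum_comm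
      _ = ∑ e ∈ Gf, (PM.filter (fun S => e ⊆ S)).card :=
          Finset.sum_congr rfl (fun e _ => (Finset.card_filter _ _).symm)
      _ = ∑ _e ∈ Gf, (n-k).choose (M-k) := by
          apply Finset.sum_congr rfl
          intro e he
          have hcs := card_supersets (n := n) (M := M) e (by rw [hGfunif e he]; exact hkM)
          rw [hPM, hcs, hGfunif e he]
      _ = τ * ((n-k).choose (M-k)) := by
          rw [Finset.sum_const, smul_eq_mul, hGfcard]
  have hXbound : ∀ S ∈ PM, S ∉ X → (Gf.filter (fun e => e ⊆ S)).card ≤ exNum k Fe M := by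
    intro S hS hSX
    have hScard : S.card = M := (Finset.mem_powersetCard.mp hS).2
    have hnc : ¬ ContainsCopy Fe {e : Finset (Fin n) | e ∈ Gf ∧ e ⊆ S} := by
      intro h
      exact hSX (Finset.mem_filter.mpr ⟨hS, h⟩)
    set eS := S.orderIsoOfFin hScard with heS
    set gS : Fin M ↪ Fin n := (eS.toEquiv.toEmbedding).trans (Function.Embedding.subtype _)
      with hgS
    have hrange : Set.range gS = ↑S := by
      ext y
      constructor
      · rintro ⟨x, rfl⟩
        exact (eS x).2
      · intro hy
        exact ⟨eS.symm ⟨y, hy⟩, by simp [hgS]⟩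
    have hle := ncard_le_exNum (Fe := Fe) (k := k) gS {e : Finset (Fin n) | e ∈ Gf ∧ e ⊆ S}
      (fun e he => by rw [hrange]; exact Finset.coe_subset.mpr he.2)
      (fun e he => hGfunif e he.1) hnc
    have hset : {e : Finset (Fin n) | e ∈ Gf ∧ e ⊆ S} = ↑(Gf.filter (fun e => e ⊆ S)) := by
      ext e
      simp
    rw [hset, Set.ncard_coe_finset] at hle
    exact hle
  have hXtop : ∀ S ∈ X, (Gf.filter (fun e => e ⊆ S)).card ≤ M.choose k := by
    intro S hS
    have hSPM : S ∈ PM := (Finset.mem_filter.mp hS).1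
    have hScard : S.card = M := (Finset.mem_powersetCard.mp hSPM).2
    have hsub : Gf.filter (fun e => e ⊆ S) ⊆ Finset.powersetCard k S := by
      intro e he
      obtain ⟨heGf, hsub⟩ := Finset.mem_filter.mp he
      exact Finset.mem_powersetCard.mpr ⟨hsub, hGfunif e heGf⟩
    calc (Gf.filter (fun e => e ⊆ S)).card ≤ _ := Finset.card_le_card hsub
      _ = M.choose k := by rw [Finset.card_powersetCard, hScard]
  have hnatineq : τ * ((n-k).choose (M-k))
      ≤ X.card * (M.choose k) + (n.choose M) * exNum k Fe M := by
    rw [← hsum]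
    have hsplit := Finset.sum_filter_add_sum_filter_not PM
      (fun S => ContainsCopy Fe {e : Finset (Fin n) | e ∈ Gf ∧ e ⊆ S})
      (fun S => (Gf.filter (fun e => e ⊆ S)).card)
    rw [← hsplit]
    apply add_le_add
    · calc ∑ S ∈ X, (Gf.filter (fun e => e ⊆ S)).card
          ≤ ∑ _S ∈ X, M.choose k := Finset.sum_le_sum hXtop
        _ = X.card * M.choose k := by rw [Finset.sum_const, smul_eq_mul]
    · set Y := PM.filter (fun S =>
        ¬ ContainsCopy Fe {e : Finset (Fin n) | e ∈ Gf ∧ e ⊆ S}) with hY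
      calc ∑ S ∈ Y, (Gf.filter (fun e => e ⊆ S)).card
          ≤ ∑ _S ∈ Y, exNum k Fe M := by
            apply Finset.sum_le_sum
            intro S hS
            obtain ⟨hSPM, hSnc⟩ := Finset.mem_filter.mp hS
            exact hXbound S hSPM (fun hSX => hSnc ((Finset.mem_filter.mp hSX).2))
        _ = Y.card * exNum k Fe M := by rw [Finset.sum_const, smul_eq_mul]
        _ ≤ PM.card * exNum k Fe M :=
            Nat.mul_le_mul_right _ (Finset.card_filter_le _ _)
        _ = (n.choose M) * exNum k Fe M := by rw [hPMcard]
  -- real supersaturation bound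
  have hXreal : (ε/2) * (n.choose M : ℝ) ≤ (X.card : ℝ) := by
    have hid : (n.choose M) * (M.choose k) = (n.choose k) * ((n-k).choose (M-k)) :=
      choose_identity hkM hnM
    have hc1 : ((n-k).choose (M-k) : ℝ) ≥ 0 := by positivity
    have hcast : (τ : ℝ) * ((n-k).choose (M-k) : ℝ)
        ≤ (X.card : ℝ) * (M.choose k : ℝ) + (n.choose M : ℝ) * (exNum k Fe M : ℝ) := by
      exact_mod_cast hnatineq
    have hτr : (π + ε) * (n.choose k : ℝ) < (τ : ℝ) := hcon
    have hidr : (n.choose M : ℝ) * (M.choose k : ℝ)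
        = (n.choose k : ℝ) * ((n-k).choose (M-k) : ℝ) := by exact_mod_cast hid
    have h2 : (π + ε) * ((n.choose M : ℝ) * (M.choose k : ℝ))
        ≤ (X.card : ℝ) * (M.choose k : ℝ)
          + (n.choose M : ℝ) * ((π + ε/2) * (M.choose k : ℝ)) := by
      have hnM0 : (0:ℝ) ≤ (n.choose M : ℝ) := by positivity
      have l1 : (π + ε) * ((n.choose M : ℝ) * (M.choose k : ℝ))
          = ((π + ε) * (n.choose k : ℝ)) * ((n-k).choose (M-k) : ℝ) := by
        rw [hidr]; ring
      have l2 : ((π + ε) * (n.choose k : ℝ)) * ((n-k).choose (M-k) : ℝ)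
          ≤ (τ : ℝ) * ((n-k).choose (M-k) : ℝ) :=
        mul_le_mul_of_nonneg_right (le_of_lt hτr) hc1
      have l3 : (n.choose M : ℝ) * (exNum k Fe M : ℝ)
          ≤ (n.choose M : ℝ) * ((π + ε/2) * (M.choose k : ℝ)) :=
        mul_le_mul_of_nonneg_left hexM hnM0
      rw [l1]
      linarith
    have h3 : (ε/2) * ((n.choose M : ℝ) * (M.choose k : ℝ))
        ≤ (X.card : ℝ) * (M.choose k : ℝ) := by nlinarith
    have h4 : ((ε/2) * (n.choose M : ℝ)) * (M.choose k : ℝ)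
        ≤ (X.card : ℝ) * (M.choose k : ℝ) := by
      rw [mul_assoc]; exact h3
    exact le_of_mul_le_mul_right h4 hMk0
  -- embeddings
  have hNE : Nonempty (ι ↪ Fin n) := by
    apply Function.Embedding.nonempty_iff_card_le.mpr
    rw [Fintype.card_fin]
    exact hvn
  set NF : Finset (ι ↪ Fin n) :=
    (Finset.univ : Finset (ι ↪ Fin n)).filter (fun f => ∀ s ∈ Fe, s.map f ∈ Gf) with hNF
  set fch : Finset (Fin n) → (ι ↪ Fin n) := fun S =>
    if h : ContainsCopy Fe {e : Finset (Fin n) | e ∈ Gf ∧ e ⊆ S} then h.choose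
    else Classical.choice hNE with hfchdef
  have hfch : ∀ S, ∀ h : ContainsCopy Fe {e : Finset (Fin n) | e ∈ Gf ∧ e ⊆ S},
      ∀ s ∈ Fe, s.map (fch S) ∈ Gf ∧ s.map (fch S) ⊆ S := by
    intro S h s hs
    have heq : fch S = h.choose := by simp only [hfchdef, dif_pos h]
    have hspec := h.choose_spec s hs
    rw [heq]
    exact ⟨hspec.1, hspec.2⟩
  have hmaps : ∀ S ∈ X, fch S ∈ NF := by
    intro S hS
    have hpred := (Finset.mem_filter.mp hS).2
    exact Finset.mem_filter.mpr ⟨Finset.mem_univ _, fun s hs => (hfch S hpred s hs).1⟩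
  have hfiber : X.card = ∑ f ∈ NF, (X.filter (fun S => fch S = f)).card :=
    Finset.card_eq_sum_card_fiberwise hmaps
  have hfibcard : ∀ f ∈ NF,
      (X.filter (fun S => fch S = f)).card ≤ (n - v).choose (M - v) := by
    intro f hf
    have hsub : X.filter (fun S => fch S = f)
        ⊆ PM.filter (fun S => ((Finset.univ : Finset ι).map f) ⊆ S) := by
      intro S hS
      obtain ⟨hSX, hfchS⟩ := Finset.mem_filter.mp hS
      obtain ⟨hSPM, hpred⟩ := Finset.mem_filter.mp hSX
      refine Finset.mem_filter.mpr ⟨hSPM, ?_⟩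
      intro y hy
      obtain ⟨x, -, rfl⟩ := Finset.mem_map.mp hy
      obtain ⟨s, hs, hxs⟩ := hcov x
      have h2 := (hfch S hpred s hs).2
      rw [hfchS] at h2
      exact h2 (Finset.mem_map_of_mem f hxs)
    have hWcard : ((Finset.univ : Finset ι).map f).card = v := by
      rw [Finset.card_map, Finset.card_univ]
    calc (X.filter (fun S => fch S = f)).card ≤ _ := Finset.card_le_card hsub
      _ = (n - v).choose (M - v) := by
          have hcs := card_supersets (n := n) (M := M) ((Finset.univ : Finset ι).map f)
            (by rw [hWcard]; exact hvM)
          rw [hPM, hcs, hWcard]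
  have hXNF : X.card ≤ NF.card * ((n-v).choose (M-v)) := by
    rw [hfiber]
    calc ∑ f ∈ NF, (X.filter (fun S => fch S = f)).card
        ≤ ∑ _f ∈ NF, (n-v).choose (M-v) := Finset.sum_le_sum hfibcard
      _ = NF.card * ((n-v).choose (M-v)) := by rw [Finset.sum_const, smul_eq_mul]
  -- upper bound on the number of embeddings
  have hNFsub : NF ⊆ (Finset.Icc 2 τ).biUnion (fun m => NF.filter (fun f =>
      (∃ s ∈ Fe, s.map f = efun (m-1)) ∧ (∃ s ∈ Fe, s.map f = efun m))) := by
    intro f hf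
    have hfG : ∀ s ∈ Fe, ∃ i, 1 ≤ i ∧ i ≤ τ ∧ s.map f = efun i := by
      intro s hs
      have hmem := (Finset.mem_filter.mp hf).2 s hs
      obtain ⟨i, hi1, hi2, hie⟩ := (hGfmem (s.map f)).mp hmem
      exact ⟨i, hi1, hi2, hie.symm⟩
    obtain ⟨m, hm2, hmτ, h1, h2⟩ := exists_consecutive hFe htwo efun hstepi hproci f hfG
    exact Finset.mem_biUnion.mpr ⟨m, Finset.mem_Icc.mpr ⟨hm2, hmτ⟩,
      Finset.mem_filter.mpr ⟨hf, h1, h2⟩⟩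
  have hQm : ∀ m, 2 ≤ m → m ≤ τ → (NF.filter (fun f =>
      (∃ s ∈ Fe, s.map f = efun (m-1)) ∧ (∃ s ∈ Fe, s.map f = efun m))).card
      ≤ C₁ * n^(v - (k+1)) := by
    intro m hm2 hmτ
    have hemne : efun (m-1) ≠ efun m := by
      intro hcon2
      have := hinjOn
        (Finset.mem_coe.mpr (Finset.mem_Icc.mpr ⟨by omega, by omega⟩))
        (Finset.mem_coe.mpr (Finset.mem_Icc.mpr ⟨by omega, by omega⟩)) hcon2
      omega
    have hsubQ : NF.filter (fun f =>
        (∃ s ∈ Fe, s.map f = efun (m-1)) ∧ (∃ s ∈ Fe, s.map f = efun m))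
        ⊆ (FeF ×ˢ FeF).biUnion (fun p => (Finset.univ : Finset (ι ↪ Fin n)).filter
          (fun f => p.1.map f = efun (m-1) ∧ p.2.map f = efun m)) := by
      intro f hf
      obtain ⟨hfNF, ⟨s1, hs1, he1⟩, ⟨s2, hs2, he2⟩⟩ := Finset.mem_filter.mp hf
      refine Finset.mem_biUnion.mpr ⟨(s1, s2), ?_, ?_⟩
      · rw [Finset.mem_product, hFeF]
        exact ⟨(Set.toFinite Fe).mem_toFinset.mpr hs1, (Set.toFinite Fe).mem_toFinset.mpr hs2⟩
      · exact Finset.mem_filter.mpr ⟨Finset.mem_univ _, he1, he2⟩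
    calc (NF.filter (fun f =>
        (∃ s ∈ Fe, s.map f = efun (m-1)) ∧ (∃ s ∈ Fe, s.map f = efun m))).card
        ≤ ∑ p ∈ FeF ×ˢ FeF, ((Finset.univ : Finset (ι ↪ Fin n)).filter
            (fun f => p.1.map f = efun (m-1) ∧ p.2.map f = efun m)).card :=
          le_trans (Finset.card_le_card hsubQ) (Finset.card_biUnion_le)
      _ ≤ ∑ _p ∈ FeF ×ˢ FeF, (2*k)^(2*k) * n^(v - (k+1)) := by
          apply Finset.sum_le_sum
          rintro ⟨s1, s2⟩ hp
          rw [Finset.mem_product] at hp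
          have hs1Fe : s1 ∈ Fe := by
            have h := hp.1; rwa [hFeF, Set.Finite.mem_toFinset] at h
          have hs2Fe : s2 ∈ Fe := by
            have h := hp.2; rwa [hFeF, Set.Finite.mem_toFinset] at h
          rcases Finset.eq_empty_or_nonempty ((Finset.univ : Finset (ι ↪ Fin n)).filter
              (fun f => s1.map f = efun (m-1) ∧ s2.map f = efun m)) with hemp | ⟨f₀, hf₀⟩
          · rw [hemp]; simp
          · obtain ⟨-, he1, he2⟩ := Finset.mem_filter.mp hf₀
            have hs12 : s1 ≠ s2 := by
              intro hcc
              apply hemne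
              rw [← he1, ← he2, hcc]
            have hQ := Q_bound (V := Fin n) hk (by rw [Fintype.card_fin]; exact hn1)
              (hFe s1 hs1Fe) (hFe s2 hs2Fe) hs12 (efun (m-1)) (efun m)
              (hcardi (m-1) (by omega) (by omega)) (hcardi m (by omega) hmτ)
            rwa [Fintype.card_fin, ← hv] at hQ
      _ = FeF.card^2 * ((2*k)^(2*k) * n^(v - (k+1))) := by
          rw [Finset.sum_const, smul_eq_mul, Finset.card_product]
          ring
      _ = C₁ * n^(v - (k+1)) := by rw [hC₁]; ring
  have hNFbound : NF.card ≤ C₁ * n^(v - 1) := by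
    have h1 : NF.card ≤ (τ - 1) * (C₁ * n^(v-(k+1))) := by
      calc NF.card ≤ ((Finset.Icc 2 τ).biUnion (fun m => NF.filter (fun f =>
              (∃ s ∈ Fe, s.map f = efun (m-1)) ∧ (∃ s ∈ Fe, s.map f = efun m)))).card :=
            Finset.card_le_card hNFsub
        _ ≤ ∑ m ∈ Finset.Icc 2 τ, (NF.filter (fun f =>
              (∃ s ∈ Fe, s.map f = efun (m-1)) ∧ (∃ s ∈ Fe, s.map f = efun m))).card :=
            Finset.card_biUnion_le
        _ ≤ ∑ _m ∈ Finset.Icc 2 τ, C₁ * n^(v-(k+1)) := Finset.sum_le_sum (fun m hm => by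
            rw [Finset.mem_Icc] at hm
            exact hQm m hm.1 hm.2)
        _ = (τ - 1) * (C₁ * n^(v-(k+1))) := by
            rw [Finset.sum_const, smul_eq_mul, Nat.card_Icc]
            congr 1
    calc NF.card ≤ (τ-1) * (C₁ * n^(v-(k+1))) := h1
      _ ≤ n.choose k * (C₁ * n^(v-(k+1))) := Nat.mul_le_mul_right _ (by omega)
      _ ≤ n^k * (C₁ * n^(v-(k+1))) := Nat.mul_le_mul_right _ (Nat.choose_le_pow n k)
      _ = C₁ * (n^k * n^(v-(k+1))) := by ring
      _ = C₁ * n^(v-1) := by rw [← pow_add, show k + (v-(k+1)) = v - 1 by omega]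
  -- final contradiction
  have hchain1 : (ε/2) * (n.choose M : ℝ) ≤ (NF.card : ℝ) * ((n-v).choose (M-v) : ℝ) := by
    refine le_trans hXreal ?_
    exact_mod_cast hXNF
  have hidv : (n.choose M) * (M.choose v) = (n.choose v) * ((n-v).choose (M-v)) :=
    choose_identity hvM hnM
  have hpos_nv : (0:ℝ) < ((n-v).choose (M-v) : ℝ) := by
    exact_mod_cast Nat.choose_pos (by omega : M - v ≤ n - v)
  have hMvpos : (0:ℝ) < (M.choose v : ℝ) := by exact_mod_cast Nat.choose_pos hvM
  have hchain2 : (ε/2) * (n.choose v : ℝ) ≤ (NF.card : ℝ) * (M.choose v : ℝ) := by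
    have hidr : (n.choose M : ℝ) * (M.choose v : ℝ)
        = (n.choose v : ℝ) * ((n-v).choose (M-v) : ℝ) := by exact_mod_cast hidv
    apply le_of_mul_le_mul_right _ hpos_nv
    calc (ε/2) * (n.choose v : ℝ) * ((n-v).choose (M-v) : ℝ)
        = ((ε/2) * (n.choose M : ℝ)) * (M.choose v : ℝ) := by
          rw [mul_assoc, ← hidr]; ring
      _ ≤ ((NF.card : ℝ) * ((n-v).choose (M-v) : ℝ)) * (M.choose v : ℝ) :=
          mul_le_mul_of_nonneg_right hchain1 (le_of_lt hMvpos)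
      _ = (NF.card : ℝ) * (M.choose v : ℝ) * ((n-v).choose (M-v) : ℝ) := by ring
  have hdesc : ((n + 1 - v : ℕ) : ℝ)^v ≤ (v.factorial : ℝ) * (n.choose v : ℝ) := by
    exact_mod_cast pow_le_factorial_mul_choose n v
  have hn0 : (0:ℝ) < (n:ℝ) := by exact_mod_cast hn1
  have hhalf : (n : ℝ)/2 ≤ ((n + 1 - v : ℕ) : ℝ) := by
    have hc : ((n + 1 - v : ℕ) : ℝ) = (n:ℝ) + 1 - (v:ℝ) := by
      have hvn1 : v ≤ n + 1 := by omega
      push_cast [Nat.cast_sub hvn1]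
      ring
    rw [hc]
    have h2v : ((2*v : ℕ):ℝ) ≤ (n:ℝ) := by exact_mod_cast (by omega : 2*v ≤ n)
    push_cast at h2v
    linarith
  have hpow : ((n:ℝ)/2)^v ≤ (v.factorial : ℝ) * (n.choose v : ℝ) :=
    le_trans (pow_le_pow_left₀ (by positivity) hhalf v) hdesc
  have hNFreal : (NF.card : ℝ) ≤ (C₁:ℝ) * (n:ℝ)^(v-1) := by exact_mod_cast hNFbound
  have hstep1 : (ε/2) * ((n:ℝ)/2)^v
      ≤ (v.factorial:ℝ) * ((C₁:ℝ) * (n:ℝ)^(v-1) * (M.choose v : ℝ)) := by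
    calc (ε/2) * ((n:ℝ)/2)^v
        ≤ (ε/2) * ((v.factorial:ℝ) * (n.choose v:ℝ)) :=
          mul_le_mul_of_nonneg_left hpow (by linarith)
      _ = (v.factorial:ℝ) * ((ε/2) * (n.choose v:ℝ)) := by ring
      _ ≤ (v.factorial:ℝ) * ((NF.card:ℝ) * (M.choose v:ℝ)) :=
          mul_le_mul_of_nonneg_left hchain2 (by positivity)
      _ ≤ (v.factorial:ℝ) * ((C₁:ℝ) * (n:ℝ)^(v-1) * (M.choose v:ℝ)) := by
          apply mul_le_mul_of_nonneg_left _ (by positivity)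
          exact mul_le_mul_of_nonneg_right hNFreal (le_of_lt hMvpos)
  have hnv1 : ((n:ℝ))^v = (n:ℝ)^(v-1) * (n:ℝ) := by
    conv_lhs => rw [show v = (v-1)+1 by omega]
    rw [pow_succ]
  have hεn : ε * (n:ℝ) * (n:ℝ)^(v-1) ≤ D * (n:ℝ)^(v-1) := by
    have hlhs : (ε/2) * ((n:ℝ)/2)^v = ε * (n:ℝ) * (n:ℝ)^(v-1) / 2^(v+1) := by
      rw [div_pow, hnv1, pow_succ]
      field_simp
    rw [hlhs] at hstep1
    have h2p : (0:ℝ) < 2^(v+1) := by positivity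
    calc ε * (n:ℝ) * (n:ℝ)^(v-1)
        = (ε * (n:ℝ) * (n:ℝ)^(v-1) / 2^(v+1)) * 2^(v+1) := by field_simp
      _ ≤ ((v.factorial:ℝ) * ((C₁:ℝ) * (n:ℝ)^(v-1) * (M.choose v:ℝ))) * 2^(v+1) :=
          mul_le_mul_of_nonneg_right hstep1 (le_of_lt h2p)
      _ = ((C₁ : ℝ) * 2^(v+1) * (v.factorial : ℝ) * (M.choose v : ℝ)) * (n:ℝ)^(v-1) := by
          ring
      _ = D * (n:ℝ)^(v-1) := by rw [hD]
  have hnpow_pos : (0:ℝ) < (n:ℝ)^(v-1) := by positivity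
  have hεn2 : ε * (n:ℝ) ≤ D := le_of_mul_le_mul_right hεn hnpow_pos
  have hnD : (n:ℝ) ≤ D / ε := (le_div_iff₀ hε).mpr (by linarith [mul_comm ε (n:ℝ)])
  have hn₁r : (n₁ : ℝ) ≤ (n : ℝ) := by exact_mod_cast hn₁n
  linarith

end Core
section Reduce

set_option linter.unusedSectionVars false

open Finset Filter Topology
open scoped Classical

variable {ι : Type*} [Fintype ι] {k : ℕ}

/-- The support of `F`: vertices contained in some edge. -/
noncomputable def suppF (Fe : Set (Finset ι)) : Finset ι :=
  Finset.univ.filter (fun x => ∃ s ∈ Fe, x ∈ s)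

/-- The restriction of `F` to its support. -/
noncomputable def FeSub (Fe : Set (Finset ι)) : Set (Finset {x // x ∈ suppF Fe}) :=
  (fun s => s.subtype (· ∈ suppF Fe)) '' Fe

lemma subset_suppF {Fe : Set (Finset ι)} {s : Finset ι} (hs : s ∈ Fe) : s ⊆ suppF Fe := by
  intro x hx
  rw [suppF, Finset.mem_filter]
  exact ⟨Finset.mem_univ _, s, hs, hx⟩

lemma map_subtype_eq {Fe : Set (Finset ι)} {s : Finset ι} (hs : s ∈ Fe) :
    (s.subtype (· ∈ suppF Fe)).map (Function.Embedding.subtype _) = s := by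
  rw [Finset.subtype_map]
  exact Finset.filter_true_of_mem (fun x hx => subset_suppF hs hx)

lemma FeSub_unif {Fe : Set (Finset ι)} (hFe : ∀ s ∈ Fe, s.card = k) :
    ∀ t ∈ FeSub Fe, t.card = k := by
  rintro t ⟨s, hs, rfl⟩
  have := map_subtype_eq hs
  calc (s.subtype (· ∈ suppF Fe)).card
      = ((s.subtype (· ∈ suppF Fe)).map (Function.Embedding.subtype _)).card :=
        (Finset.card_map _).symm
    _ = s.card := by rw [this]
    _ = k := hFe s hs

lemma FeSub_cov {Fe : Set (Finset ι)} :
    ∀ x : {x // x ∈ suppF Fe}, ∃ t ∈ FeSub Fe, x ∈ t := by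
  rintro ⟨y, hy⟩
  rw [suppF, Finset.mem_filter] at hy
  obtain ⟨-, s, hs, hys⟩ := hy
  exact ⟨s.subtype _, ⟨s, hs, rfl⟩, Finset.mem_subtype.mpr hys⟩

lemma FeSub_two {Fe : Set (Finset ι)} (htwo : ∃ s₁ ∈ Fe, ∃ s₂ ∈ Fe, s₁ ≠ s₂) :
    ∃ t₁ ∈ FeSub Fe, ∃ t₂ ∈ FeSub Fe, t₁ ≠ t₂ := by
  obtain ⟨s₁, hs₁, s₂, hs₂, hne⟩ := htwo
  refine ⟨s₁.subtype _, ⟨s₁, hs₁, rfl⟩, s₂.subtype _, ⟨s₂, hs₂, rfl⟩, ?_⟩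
  intro hcon
  apply hne
  rw [← map_subtype_eq hs₁, ← map_subtype_eq hs₂, hcon]

lemma FeSub_nonempty {Fe : Set (Finset ι)} (hne : Fe.Nonempty) : (FeSub Fe).Nonempty := by
  obtain ⟨s, hs⟩ := hne
  exact ⟨s.subtype _, s, hs, rfl⟩

/-- Transfer of copies between `F` and its support restriction. -/
lemma createsCopy_iff {V : Type*} [Fintype V] [DecidableEq V] (Fe : Set (Finset ι))
    (hsne : (suppF Fe).Nonempty) (hcard : Fintype.card ι ≤ Fintype.card V)
    (H : Set (Finset V)) (e : Finset V) :
    CreatesCopy Fe H e ↔ CreatesCopy (FeSub Fe) H e := by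
  constructor
  · rintro ⟨f, hall, s, hs, hmap⟩
    refine ⟨(Function.Embedding.subtype _).trans f, ?_, s.subtype _, ⟨s, hs, rfl⟩, ?_⟩
    · rintro t ⟨s', hs', rfl⟩
      rw [← Finset.map_map, map_subtype_eq hs']
      exact hall s' hs'
    · rw [← Finset.map_map, map_subtype_eq hs]
      exact hmap
  · rintro ⟨f₂, hall, t, ⟨s, hs, rfl⟩, hmap⟩
    obtain ⟨y0, hy0⟩ := hsne
    set φ : ι → V := fun x => if h : x ∈ suppF Fe then f₂ ⟨x, h⟩ else f₂ ⟨y0, hy0⟩ with hφ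
    have hinjOn : Set.InjOn φ ↑(suppF Fe) := by
      intro x hx y hy hxy
      rw [Finset.mem_coe] at hx hy
      simp only [hφ, dif_pos hx, dif_pos hy] at hxy
      have := f₂.injective hxy
      exact congrArg Subtype.val this
    obtain ⟨f, hf⟩ := ext_emb (suppF Fe) φ hinjOn hcard
    have hagree : ∀ x (hx : x ∈ suppF Fe), f x = f₂ ⟨x, hx⟩ := by
      intro x hx
      rw [hf x hx]
      simp only [hφ, dif_pos hx]
    have hmapeq : ∀ s' ∈ Fe, s'.map f = (s'.subtype (· ∈ suppF Fe)).map f₂ := by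
      intro s' hs'
      ext y
      simp only [Finset.mem_map]
      constructor
      · rintro ⟨x, hxs, rfl⟩
        have hxA := subset_suppF hs' hxs
        exact ⟨⟨x, hxA⟩, Finset.mem_subtype.mpr hxs, (hagree x hxA).symm⟩
      · rintro ⟨⟨x, hxA⟩, hxt, rfl⟩
        exact ⟨x, Finset.mem_subtype.mp hxt, hagree x hxA⟩
    refine ⟨f, ?_, s, hs, ?_⟩
    · intro s' hs'
      rw [hmapeq s' hs']
      exact hall _ ⟨s', hs', rfl⟩
    · rw [hmapeq s hs]
      exact hmap

lemma containsCopy_iff {V : Type*} [Fintype V] [DecidableEq V] (Fe : Set (Finset ι))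
    (hsne : (suppF Fe).Nonempty) (hcard : Fintype.card ι ≤ Fintype.card V)
    (H : Set (Finset V)) :
    ContainsCopy Fe H ↔ ContainsCopy (FeSub Fe) H := by
  constructor
  · rintro ⟨f, hall⟩
    refine ⟨(Function.Embedding.subtype _).trans f, ?_⟩
    rintro t ⟨s', hs', rfl⟩
    rw [← Finset.map_map, map_subtype_eq hs']
    exact hall s' hs'
  · rintro ⟨f₂, hall⟩
    obtain ⟨y0, hy0⟩ := hsne
    set φ : ι → V := fun x => if h : x ∈ suppF Fe then f₂ ⟨x, h⟩ else f₂ ⟨y0, hy0⟩ with hφ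
    have hinjOn : Set.InjOn φ ↑(suppF Fe) := by
      intro x hx y hy hxy
      rw [Finset.mem_coe] at hx hy
      simp only [hφ, dif_pos hx, dif_pos hy] at hxy
      have := f₂.injective hxy
      exact congrArg Subtype.val this
    obtain ⟨f, hf⟩ := ext_emb (suppF Fe) φ hinjOn hcard
    have hagree : ∀ x (hx : x ∈ suppF Fe), f x = f₂ ⟨x, hx⟩ := by
      intro x hx
      rw [hf x hx]
      simp only [hφ, dif_pos hx]
    refine ⟨f, ?_⟩
    intro s' hs'
    have hmapeq : s'.map f = (s'.subtype (· ∈ suppF Fe)).map f₂ := by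
      ext y
      simp only [Finset.mem_map]
      constructor
      · rintro ⟨x, hxs, rfl⟩
        have hxA := subset_suppF hs' hxs
        exact ⟨⟨x, hxA⟩, Finset.mem_subtype.mpr hxs, (hagree x hxA).symm⟩
      · rintro ⟨⟨x, hxA⟩, hxt, rfl⟩
        exact ⟨x, Finset.mem_subtype.mp hxt, hagree x hxA⟩
    rw [hmapeq]
    exact hall _ ⟨s', hs', rfl⟩

lemma bootStep_eq {V : Type*} [Fintype V] [DecidableEq V] (Fe : Set (Finset ι))
    (hsne : (suppF Fe).Nonempty) (hcard : Fintype.card ι ≤ Fintype.card V)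
    (H : Set (Finset V)) : bootStep k Fe H = bootStep k (FeSub Fe) H := by
  ext e
  simp only [bootStep, Set.mem_union, Set.mem_setOf_eq]
  rw [createsCopy_iff Fe hsne hcard]

lemma procSeq_eq {V : Type*} [Fintype V] [DecidableEq V] (Fe : Set (Finset ι))
    (hsne : (suppF Fe).Nonempty) (hcard : Fintype.card ι ≤ Fintype.card V)
    (H0 : Set (Finset V)) (i : ℕ) : procSeq k Fe H0 i = procSeq k (FeSub Fe) H0 i := by
  induction i with
  | zero => rfl
  | succ m ih => rw [procSeq_succ, procSeq_succ, ih, bootStep_eq Fe hsne hcard]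

lemma runTime_eq {V : Type*} [Fintype V] [DecidableEq V] (Fe : Set (Finset ι))
    (hsne : (suppF Fe).Nonempty) (hcard : Fintype.card ι ≤ Fintype.card V)
    (H0 : Set (Finset V)) : runTime k Fe H0 = runTime k (FeSub Fe) H0 := by
  simp only [runTime]
  congr 1
  ext i
  simp only [Set.mem_setOf_eq]
  rw [procSeq_eq Fe hsne hcard, procSeq_eq Fe hsne hcard]

lemma maxRunTime_eq (Fe : Set (Finset ι)) (hsne : (suppF Fe).Nonempty) {n : ℕ}
    (hcard : Fintype.card ι ≤ n) : maxRunTime k Fe n = maxRunTime k (FeSub Fe) n := by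
  have hcard' : Fintype.card ι ≤ Fintype.card (Fin n) := by rwa [Fintype.card_fin]
  simp only [maxRunTime]
  congr 1
  ext t
  constructor
  · rintro ⟨H0, h1, h2⟩
    exact ⟨H0, h1, by rw [h2, runTime_eq Fe hsne hcard']⟩
  · rintro ⟨H0, h1, h2⟩
    exact ⟨H0, h1, by rw [h2, ← runTime_eq Fe hsne hcard']⟩

lemma exNum_eq (Fe : Set (Finset ι)) (hsne : (suppF Fe).Nonempty) {n : ℕ}
    (hcard : Fintype.card ι ≤ n) : exNum k Fe n = exNum k (FeSub Fe) n := by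
  have hcard' : Fintype.card ι ≤ Fintype.card (Fin n) := by rwa [Fintype.card_fin]
  simp only [exNum]
  congr 1
  ext m
  constructor
  · rintro ⟨H, h1, h2, h3⟩
    exact ⟨H, h1, fun hc => h2 ((containsCopy_iff Fe hsne hcard' H).mpr hc), h3⟩
  · rintro ⟨H, h1, h2, h3⟩
    exact ⟨H, h1, fun hc => h2 ((containsCopy_iff Fe hsne hcard' H).mp hc), h3⟩

lemma turanDensity_eq (Fe : Set (Finset ι)) (hFe : ∀ s ∈ Fe, s.card = k)
    (hk1 : 1 ≤ k) (hne : Fe.Nonempty) :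
    turanDensity k (FeSub Fe) = turanDensity k Fe ∧
      Tendsto (fun n : ℕ => (exNum k (FeSub Fe) n : ℝ) / (n.choose k : ℝ)) atTop
        (𝓝 (turanDensity k Fe)) := by
  have hsne : (suppF Fe).Nonempty := by
    obtain ⟨s, hs⟩ := hne
    have : s.Nonempty := Finset.card_pos.mp (by rw [hFe s hs]; omega)
    obtain ⟨x, hx⟩ := this
    exact ⟨x, subset_suppF hs hx⟩
  obtain ⟨htd, -⟩ := turan_facts (k := k) (Fe := Fe) hk1 hne
  have heq : (fun n : ℕ => (exNum k Fe n : ℝ) / (n.choose k : ℝ))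
      =ᶠ[atTop] (fun n : ℕ => (exNum k (FeSub Fe) n : ℝ) / (n.choose k : ℝ)) := by
    rw [Filter.eventuallyEq_iff_exists_mem]
    refine ⟨{n | Fintype.card ι ≤ n}, mem_atTop _, ?_⟩
    intro n hn
    simp only
    rw [exNum_eq Fe hsne hn]
  have htd₂ := htd.congr' heq
  exact ⟨htd₂.limUnder_eq, htd₂⟩

end Reduce
section Final

set_option linter.unusedSectionVars false

open Finset Filter Topology

lemma maxRunTime_le_of {ι : Type*} [Fintype ι] {k n : ℕ} {Fe : Set (Finset ι)} {B : ℝ}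
    (hB : 0 ≤ B)
    (h : ∀ H0 : Set (Finset (Fin n)), (∀ e ∈ H0, e.card = k) → (runTime k Fe H0 : ℝ) ≤ B) :
    (maxRunTime k Fe n : ℝ) ≤ B := by
  classical
  set T : Set ℕ := {t | ∃ H0 : Set (Finset (Fin n)),
    (∀ e ∈ H0, e.card = k) ∧ t = runTime k Fe H0} with hT
  rcases T.eq_empty_or_nonempty with hTe | hTne
  · have : maxRunTime k Fe n = 0 := by
      rw [maxRunTime, ← hT, hTe, csSup_empty]
      rfl
    rw [this]
    simpa using hB
  · have hbdd : BddAbove T := by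
      refine ⟨Fintype.card (Finset (Fin n)), ?_⟩
      rintro t ⟨H0, -, rfl⟩
      exact runTime_le
    have hmem : sSup T ∈ T := Nat.sSup_mem hTne hbdd
    obtain ⟨H0, h1, h2⟩ := hmem
    have : maxRunTime k Fe n = runTime k Fe H0 := by
      rw [maxRunTime, ← hT, h2]
    rw [this]
    exact h H0 h1

lemma runTime_empty {ι V : Type*} (k : ℕ) (H0 : Set (Finset V)) :
    runTime k (∅ : Set (Finset ι)) H0 = 0 := by
  have h1 : procSeq k (∅ : Set (Finset ι)) H0 0 = procSeq k (∅ : Set (Finset ι)) H0 1 := by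
    show H0 = bootStep k ∅ H0
    ext e
    simp only [bootStep, Set.mem_union, Set.mem_setOf_eq]
    constructor
    · exact Or.inl
    · rintro (h | ⟨-, f, -, s, hs, -⟩)
      · exact h
      · exact absurd hs (Set.notMem_empty s)
  exact Nat.sInf_eq_zero.mpr (Or.inl h1)

lemma exNum_empty {ι : Type*} [Fintype ι] (k : ℕ) {n : ℕ} (hcard : Fintype.card ι ≤ n) :
    exNum k (∅ : Set (Finset ι)) n = 0 := by
  have hset : {m | ∃ H : Set (Finset (Fin n)), (∀ e ∈ H, e.card = k) ∧
      ¬ ContainsCopy (∅ : Set (Finset ι)) H ∧ m = H.ncard} = ∅ := by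
    ext m
    simp only [Set.mem_setOf_eq, Set.mem_empty_iff_false, iff_false]
    rintro ⟨H, -, h2, -⟩
    apply h2
    have hNE : Nonempty (ι ↪ Fin n) :=
      Function.Embedding.nonempty_iff_card_le.mpr (by rwa [Fintype.card_fin])
    exact ⟨Classical.choice hNE, fun s hs => absurd hs (Set.notMem_empty s)⟩
  rw [exNum, hset, csSup_empty]
  rfl

lemma turanDensity_empty {ι : Type*} [Fintype ι] (k : ℕ) :
    turanDensity k (∅ : Set (Finset ι)) = 0 := by
  have htd : Tendsto (fun n : ℕ =>
      (exNum k (∅ : Set (Finset ι)) n : ℝ) / (n.choose k : ℝ)) atTop (𝓝 0) := by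
    apply Tendsto.congr' _ (tendsto_const_nhds (x := (0:ℝ)))
    rw [Filter.eventuallyEq_iff_exists_mem]
    refine ⟨{n | Fintype.card ι ≤ n}, mem_atTop _, ?_⟩
    intro n hn
    simp only
    rw [exNum_empty k hn]
    simp
  exact htd.limUnder_eq

lemma runTime_singleton {ι V : Type*} (k : ℕ) (s₀ : Finset ι) (H0 : Set (Finset V)) :
    runTime k ({s₀} : Set (Finset ι)) H0 ≤ 1 := by
  have h1 : procSeq k ({s₀} : Set (Finset ι)) H0 1
      = procSeq k ({s₀} : Set (Finset ι)) H0 (1 + 1) := by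
    apply Set.Subset.antisymm (procSeq_mono (by omega))
    intro e he
    rw [procSeq_succ] at he
    rcases he with h | ⟨hcard, f, hall, s, hs, hmap⟩
    · exact h
    · rw [procSeq_succ]
      right
      refine ⟨hcard, f, ?_, s, hs, hmap⟩
      intro s' hs'
      have hs'0 : s' = s₀ := hs'
      have hss : s = s₀ := hs
      right
      have : s'.map f = e := by rw [hs'0, ← hss, hmap]
      exact this
  exact Nat.sInf_le h1

theorem maxRunTime_le_turanDensity' (k : ℕ) (hk : 2 ≤ k) {ι : Type*} [Fintype ι]
    (Fe : Set (Finset ι)) (hFe : ∀ s ∈ Fe, s.card = k) (ε : ℝ) (hε : 0 < ε) :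
    ∃ n₀ : ℕ, ∀ n : ℕ, n₀ ≤ n →
      (maxRunTime k Fe n : ℝ) ≤ (turanDensity k Fe + ε) * (n.choose k : ℝ) := by
  classical
  rcases Set.eq_empty_or_nonempty Fe with rfl | hne
  · refine ⟨Fintype.card ι, fun n hn => ?_⟩
    have hπ : turanDensity k (∅ : Set (Finset ι)) = 0 := turanDensity_empty k
    have hB : (0:ℝ) ≤ (turanDensity k (∅ : Set (Finset ι)) + ε) * (n.choose k : ℝ) := by
      rw [hπ]
      positivity
    apply maxRunTime_le_of hB
    intro H0 _
    rw [runTime_empty]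
    simpa using hB
  by_cases hsing : ∃ s₀, Fe = {s₀}
  · obtain ⟨s₀, rfl⟩ := hsing
    have hs₀k : s₀.card = k := hFe s₀ rfl
    obtain ⟨-, hπ0⟩ := turan_facts (k := k) (Fe := ({s₀} : Set (Finset ι)))
      (by omega) ⟨s₀, rfl⟩
    obtain ⟨m, hm⟩ := exists_nat_gt (1/ε)
    refine ⟨k.factorial * (m+1) + k, fun n hn => ?_⟩
    have hCge : m + 1 ≤ n.choose k := by
      have h1 : n + 1 - k ≤ (n+1-k)^k := Nat.le_self_pow (by omega) _
      have h2 := pow_le_factorial_mul_choose n k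
      have h3 : k.factorial * (m+1) ≤ k.factorial * n.choose k := by omega
      exact Nat.le_of_mul_le_mul_left h3 k.factorial_pos
    have hC0 : (0:ℝ) ≤ (n.choose k : ℝ) := by positivity
    have hC1 : 1 ≤ ε * (n.choose k : ℝ) := by
      have hcge : ((m:ℝ)+1) ≤ (n.choose k : ℝ) := by exact_mod_cast hCge
      have h5 := mul_lt_mul_of_pos_left hm hε
      rw [mul_one_div, div_self (ne_of_gt hε)] at h5
      nlinarith
    have hB : (0:ℝ) ≤ (turanDensity k ({s₀} : Set (Finset ι)) + ε) * (n.choose k : ℝ) :=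
      mul_nonneg (by linarith) hC0
    apply maxRunTime_le_of hB
    intro H0 _
    have hrt := runTime_singleton (V := Fin n) k s₀ H0
    calc (runTime k ({s₀} : Set (Finset ι)) H0 : ℝ) ≤ 1 := by exact_mod_cast hrt
      _ ≤ ε * (n.choose k : ℝ) := hC1
      _ ≤ (turanDensity k ({s₀} : Set (Finset ι)) + ε) * (n.choose k : ℝ) := by nlinarith
  · have htwo : ∃ s₁ ∈ Fe, ∃ s₂ ∈ Fe, s₁ ≠ s₂ := by
      obtain ⟨s₁, hs₁⟩ := hne
      by_contra hcon
      push_neg at hcon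
      apply hsing
      refine ⟨s₁, Set.eq_singleton_iff_unique_mem.mpr ⟨hs₁, fun s hs => hcon s hs s₁ hs₁⟩⟩
    have hsne : (suppF Fe).Nonempty := by
      obtain ⟨s, hs⟩ := hne
      have hsnon : s.Nonempty := Finset.card_pos.mp (by rw [hFe s hs]; omega)
      obtain ⟨x, hx⟩ := hsnon
      exact ⟨x, subset_suppF hs hx⟩
    obtain ⟨hπeq, htd₂⟩ := turanDensity_eq Fe hFe (by omega) hne
    obtain ⟨n₀', hcore⟩ := core_bound hk (FeSub Fe) (FeSub_unif hFe) FeSub_cov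
      (FeSub_two htwo) hε
    refine ⟨max n₀' (Fintype.card ι), fun n hn => ?_⟩
    have hn1 : n₀' ≤ n := le_trans (le_max_left _ _) hn
    have hn2 : Fintype.card ι ≤ n := le_trans (le_max_right _ _) hn
    rw [maxRunTime_eq Fe hsne hn2]
    have hπ2 : 0 ≤ turanDensity k (FeSub Fe) :=
      (turan_facts (k := k) (by omega) (FeSub_nonempty hne)).2
    have hB : (0:ℝ) ≤ (turanDensity k Fe + ε) * (n.choose k : ℝ) := by
      have h0 : 0 ≤ turanDensity k Fe := by rw [← hπeq]; exact hπ2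
      have : (0:ℝ) ≤ (n.choose k : ℝ) := by positivity
      nlinarith
    apply maxRunTime_le_of hB
    intro H0 _
    have hb := hcore n hn1 H0
    rwa [hπeq] at hb

end Final

/-- For every `k ≥ 2`, every `k`-graph `F`, and every `ε > 0`, for all sufficiently
large `n`, `M_F(n) ≤ (π(F) + ε) · C(n,k)`. -/
theorem maxRunTime_le_turanDensity (k : ℕ) (hk : 2 ≤ k) {ι : Type*} [Fintype ι]
    (Fe : Set (Finset ι)) (hFe : ∀ s ∈ Fe, s.card = k) (ε : ℝ) (hε : 0 < ε) :
    ∃ n₀ : ℕ, ∀ n : ℕ, n₀ ≤ n →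
      (maxRunTime k Fe n : ℝ) ≤ (turanDensity k Fe + ε) * (n.choose k : ℝ) := by
  exact maxRunTime_le_turanDensity' k hk Fe hFe ε hε
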